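/- Every automorphism φ of the free product C₂ ⋆ C_m (with m ≥ 3), presented as ⟨u, v | u² = vᵐ = 1⟩, is of the form φ = ν_r ∘ ι_g for some g in the group and some r ∈ {1, ..., m-1} coprime to m, where ν_r is the automorphism with ν_r(u) = u, ν_r(v) = v^r, and ι_g is conjugation by g. -/

import Mathlib

/-- Relators for the free product `C₂ ⋆ C_m = ⟨u, v | u² = vᵐ = 1⟩`,
with `u = of 0`, `v = of 1`. -/
def relC2Cm (m : ℕ) : Set (FreeGroup (Fin 2)) :=
  {FreeGroup.of 0 ^ 2, FreeGroup.of 1 ^ m}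


open Monoid Monoid.CoprodI

set_option linter.unusedSectionVars false

namespace WordInfra

variable {ι : Type*} {M : ι → Type*} [∀ i, Group (M i)] [DecidableEq ι] [∀ i, DecidableEq (M i)]

/-- the group element given by a list of letters -/
def lprod (l : List (Σ i, M i)) : CoprodI M :=
  (l.map fun x => CoprodI.of x.2).prod

@[simp] lemma lprod_nil : lprod ([] : List (Σ i, M i)) = 1 := rfl

@[simp] lemma lprod_cons (x : Σ i, M i) (l : List (Σ i, M i)) :
    lprod (x :: l) = CoprodI.of x.2 * lprod l := by
  simp [lprod]

@[simp] lemma lprod_append (l₁ l₂ : List (Σ i, M i)) :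
    lprod (l₁ ++ l₂) = lprod l₁ * lprod l₂ := by
  simp [lprod]

@[simp] lemma lprod_singleton (x : Σ i, M i) : lprod [x] = CoprodI.of x.2 := by
  simp [lprod]

/-- a reduced list -/
def Red (l : List (Σ i, M i)) : Prop :=
  (∀ x ∈ l, x.2 ≠ 1) ∧ l.Chain' fun a b => a.1 ≠ b.1

lemma Red.nil : Red ([] : List (Σ i, M i)) := ⟨by simp, List.isChain_nil⟩

def Red.word {l : List (Σ i, M i)} (h : Red l) : Word M := ⟨l, h.1, h.2⟩

lemma lprod_eq_prod {l : List (Σ i, M i)} (h : Red l) : lprod l = Word.prod h.word := rfl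

/-- Key uniqueness: the word of a reduced product is the list itself. -/
lemma equiv_lprod {l : List (Σ i, M i)} (h : Red l) :
    Word.equiv (lprod l) = h.word := by
  have : lprod l = Word.equiv.symm h.word := rfl
  rw [this, Equiv.apply_symm_apply]

lemma toList_equiv_lprod {l : List (Σ i, M i)} (h : Red l) :
    (Word.equiv (lprod l)).toList = l := by rw [equiv_lprod h]; rfl

/-- uniqueness of reduced expressions -/
lemma red_unique {l₁ l₂ : List (Σ i, M i)} (h₁ : Red l₁) (h₂ : Red l₂)
    (h : lprod l₁ = lprod l₂) : l₁ = l₂ := by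
  have := toList_equiv_lprod h₁
  rw [h, toList_equiv_lprod h₂] at this
  exact this.symm

lemma exists_red (x : CoprodI M) : ∃ l : List (Σ i, M i), Red l ∧ lprod l = x := by
  refine ⟨(Word.equiv x).toList, ⟨(Word.equiv x).ne_one, (Word.equiv x).chain_ne⟩, ?_⟩
  have : lprod (Word.equiv x).toList = Word.prod (Word.equiv x) := rfl
  rw [this]
  exact Word.equiv.symm_apply_apply x

lemma lprod_ne_one {l : List (Σ i, M i)} (h : Red l) (hne : l ≠ []) : lprod l ≠ 1 := by
  intro heq
  have : l = [] := red_unique h Red.nil (by simpa using heq)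
  exact hne this

lemma Red.append {l₁ l₂ : List (Σ i, M i)} (h₁ : Red l₁) (h₂ : Red l₂)
    (hj : ∀ a ∈ l₁.getLast?, ∀ b ∈ l₂.head?, a.1 ≠ b.1) : Red (l₁ ++ l₂) := by
  refine ⟨?_, List.IsChain.append h₁.2 h₂.2 ?_⟩
  · intro x hx; rcases List.mem_append.mp hx with h | h
    exacts [h₁.1 x h, h₂.1 x h]
  · intro a ha b hb; exact hj a ha b hb

/-- inverse of a reduced list -/
def linv (l : List (Σ i, M i)) : List (Σ i, M i) :=
  (l.map fun x => ⟨x.1, x.2⁻¹⟩).reverse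

@[simp] lemma lprod_linv (l : List (Σ i, M i)) : lprod (linv l) = (lprod l)⁻¹ := by
  induction l with
  | nil => simp [linv]
  | cons x l ih => simp [linv, lprod] at ih ⊢; simp [ih]

lemma Red.linv {l : List (Σ i, M i)} (h : Red l) : Red (WordInfra.linv l) := by
  constructor
  · intro x hx
    simp only [WordInfra.linv, List.mem_reverse, List.mem_map] at hx
    obtain ⟨a, ha, rfl⟩ := hx
    simpa using h.1 a ha
  · rw [WordInfra.linv]; change List.IsChain _ _; rw [List.isChain_reverse]
    rw [List.isChain_map]
    exact h.2.imp (fun a b hab => fun e => hab e.symm)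


lemma Red.prefix {l₁ l₂ : List (Σ i, M i)} (h : Red l₂) (hs : l₁.IsPrefix l₂) : Red l₁ :=
  ⟨fun x hx => h.1 x (hs.sublist.mem hx), h.2.prefix hs⟩

lemma red_power {l : List (Σ i, M i)} (h : Red l) (hne : l ≠ [])
    (hij : ∀ a ∈ l.head?, ∀ b ∈ l.getLast?, b.1 ≠ a.1) (n : ℕ) :
    Red (List.replicate n l).flatten ∧ lprod (List.replicate n l).flatten = (lprod l) ^ n := by
  induction n with
  | zero => simpa using Red.nil
  | succ k ih =>
    rw [List.replicate_succ, List.flatten_cons]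
    constructor
    · refine Red.append h ih.1 ?_
      intro a ha b hb
      rcases k with _ | k
      · simp at hb
      · rw [List.replicate_succ, List.flatten_cons] at hb
        rw [List.head?_append_of_ne_nil _ hne] at hb
        exact hij b hb a ha
    · rw [lprod_append, ih.2, pow_succ']

lemma Red.tail {a : Σ i, M i} {l : List (Σ i, M i)} (h : Red (a :: l)) : Red l :=
  ⟨fun x hx => h.1 x (List.mem_cons_of_mem _ hx), h.2.tail⟩

lemma torsion_conj_aux : ∀ (N : ℕ) (l : List (Σ i, M i)), l.length ≤ N → Red l → l ≠ [] →
    ∀ n : ℕ, 0 < n → (lprod l) ^ n = 1 →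
    ∃ (g : CoprodI M) (i : ι) (μ : M i), μ ≠ 1 ∧ lprod l = g * CoprodI.of μ * g⁻¹ := by
  intro N
  induction N with
  | zero =>
    intro l hlen _ hne
    rw [Nat.le_zero, List.length_eq_zero_iff] at hlen
    exact absurd hlen hne
  | succ N ih =>
    rintro (_ | ⟨⟨ia, a2⟩, l₂⟩) hlen hred hne n hn hpow
    · exact absurd rfl hne
    rcases l₂ with _ | ⟨b₀, l₃⟩
    · refine ⟨1, ia, a2, hred.1 _ (List.mem_singleton_self _), by simp⟩
    set l₂ := b₀ :: l₃ with hl₂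
    have hne2 : l₂ ≠ [] := List.cons_ne_nil _ _
    set a : (Σ i, M i) := ⟨ia, a2⟩ with ha
    set l : List (Σ i, M i) := a :: l₂ with hl
    rcases hbb : l₂.getLast hne2 with ⟨ib, b2⟩
    have hb2ne : b2 ≠ 1 := by
      have := hred.1 (l₂.getLast hne2) (List.mem_cons_of_mem _ (List.getLast_mem hne2))
      rw [hbb] at this; exact this
    by_cases hidx : ib = ia
    · -- cyclic reduction
      subst hidx
      have hdec : l₂.dropLast ++ [(⟨ib, b2⟩ : Σ i, M i)] = l₂ := by
        rw [← hbb]; exact List.dropLast_append_getLast hne2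
      set mid := l₂.dropLast with hmid
      have hlx : lprod l = CoprodI.of a2 * (lprod mid * CoprodI.of b2) := by
        conv_lhs => rw [hl, ← hdec]
        simp [mul_assoc, ha]
      have hmidred : Red mid := (hred.tail).prefix (List.dropLast_prefix l₂)
      have hmidlast : ∀ x ∈ mid.getLast?, x.1 ≠ ib := by
        have hch : (mid ++ [(⟨ib, b2⟩ : Σ i, M i)]).Chain' (fun p q => p.1 ≠ q.1) := by
          rw [hdec]; exact hred.2.tail
        intro x hx
        have := (List.isChain_append.mp hch).2.2 x hx ⟨ib, b2⟩ (by simp)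
        simpa using this
      set x' : CoprodI M := (CoprodI.of a2)⁻¹ * lprod l * CoprodI.of a2 with hx'
      have hx'pow : x' ^ n = 1 := by
        have : x' = (MulAut.conj (CoprodI.of a2)⁻¹) (lprod l) := by
          simp [hx', MulAut.conj_apply, mul_assoc]
        rw [this, ← map_pow, hpow, map_one]
      have hx'eq : x' = lprod mid * CoprodI.of (b2 * a2) := by
        rw [hx', hlx, map_mul]
        group
      have hfinish : ∀ l' : List (Σ i, M i), Red l' → l' ≠ [] → l'.length ≤ N →
          lprod l' = x' →
          ∃ (g : CoprodI M) (i : ι) (μ : M i), μ ≠ 1 ∧ lprod l = g * CoprodI.of μ * g⁻¹ := by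
        intro l' hred' hne' hlen' heq'
        obtain ⟨g, i, μ, hμ, hgm⟩ := ih l' hlen' hred' hne' n hn (by rw [heq']; exact hx'pow)
        refine ⟨CoprodI.of a2 * g, i, μ, hμ, ?_⟩
        have : lprod l = CoprodI.of a2 * x' * (CoprodI.of a2)⁻¹ := by
          rw [hx']; group
        rw [this, ← heq', hgm]
        group
      by_cases hone : b2 * a2 = 1
      · -- full cancellation
        have hmidne : mid ≠ [] := by
          intro hmnil
          have : l₂ = [(⟨ib, b2⟩ : Σ i, M i)] := by rw [← hdec, hmnil]; rfl
          have hch := hred.2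
          rw [hl, this] at hch
          exact (List.isChain_cons_cons.mp hch).1 rfl
        refine hfinish mid hmidred hmidne ?_ ?_
        · have : mid.length + 1 ≤ l₂.length := by
            conv_rhs => rw [← hdec]
            simp
          have hll : l.length ≤ N + 1 := hlen
          rw [hl] at hll
          simp at hll
          omega
        · rw [hx'eq, hone, map_one, mul_one]
      · refine hfinish (mid ++ [⟨ib, b2 * a2⟩]) ?_ (by simp) ?_ ?_
        · refine Red.append hmidred ⟨by simpa using hone, List.isChain_singleton _⟩ ?_
          intro p hp q hq
          simp only [List.head?_cons, Option.mem_some_iff] at hq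
          subst hq
          exact hmidlast p hp
        · have : mid.length + 1 ≤ l₂.length := by
            conv_rhs => rw [← hdec]; simp
          have hll : l.length ≤ N + 1 := hlen
          rw [hl] at hll
          simp only [List.length_cons] at hll
          simp only [List.length_append, List.length_singleton]
          omega
        · rw [lprod_append, lprod_singleton, hx'eq]
    · -- cyclically reduced: infinite order, contradiction
      exfalso
      have hj : ∀ p ∈ l.head?, ∀ q ∈ l.getLast?, q.1 ≠ p.1 := by
        intro p hp q hq
        simp only [hl, List.head?_cons, Option.mem_some_iff] at hp
        have hlast : l.getLast? = some ⟨ib, b2⟩ := by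
          rw [List.getLast?_eq_getLast hne]
          have : l.getLast hne = l₂.getLast hne2 := List.getLast_cons hne2
          rw [this, hbb]
        rw [hlast, Option.mem_some_iff] at hq
        subst hp; subst hq
        exact hidx
      have hkey := red_power hred hne hj n
      rcases n with _ | k
      · exact absurd hn (by simp)
      have : (List.replicate (k+1) l).flatten ≠ [] := by
        rw [List.replicate_succ, List.flatten_cons, hl]
        simp
      exact lprod_ne_one hkey.1 this (by rw [hkey.2, hpow])

/-- torsion elements are conjugate into a factor -/
lemma torsion_conj {x : CoprodI M} {n : ℕ} (hn : 0 < n) (hxn : x ^ n = 1) (hx1 : x ≠ 1) :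
    ∃ (g : CoprodI M) (i : ι) (μ : M i), μ ≠ 1 ∧ x = g * CoprodI.of μ * g⁻¹ := by
  obtain ⟨l, hl, rfl⟩ := exists_red x
  have hne : l ≠ [] := by rintro rfl; exact hx1 rfl
  exact torsion_conj_aux l.length l le_rfl hl hne n hn hxn

end WordInfra

open WordInfra Monoid.CoprodI Multiplicative

namespace C2Cm

/-- index-dependent modulus -/
def kk (m : ℕ) : Fin 2 → ℕ := ![2, m]

abbrev Mfam (m : ℕ) : Fin 2 → Type := fun i => Multiplicative (ZMod (kk m i))

abbrev G (m : ℕ) := Monoid.CoprodI (Mfam m)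

variable (m : ℕ)

def uu : G m := CoprodI.of (i := 0) (ofAdd (1 : ZMod 2))
def vv : G m := CoprodI.of (i := 1) (ofAdd (1 : ZMod m))

/-- the `u`-letter -/
def Ul : Σ i, Mfam m i := ⟨0, ofAdd (1 : ZMod 2)⟩
/-- a `v`-letter -/
def Vl (j : ZMod m) : Σ i, Mfam m i := ⟨1, ofAdd j⟩

lemma uu_lprod : uu m = lprod [Ul m] := by simp [uu, Ul]

lemma vpow_lprod (j : ZMod m) :
    CoprodI.of (M := Mfam m) (i := 1) (ofAdd j) = lprod [Vl m j] := by simp [Vl]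

instance : NeZero (kk m 0) := ⟨by simp [kk]⟩
instance [NeZero m] : NeZero (kk m 1) := ⟨by simpa [kk] using NeZero.ne m⟩

lemma red_Ul : Red [Ul m] := by
  refine ⟨?_, List.isChain_singleton _⟩
  rintro x hx
  simp only [List.mem_singleton] at hx
  subst hx
  show (ofAdd (1 : ZMod 2)) ≠ 1
  decide

lemma red_Vl (j : ZMod m) (hj : j ≠ 0) : Red [Vl m j] := by
  refine ⟨?_, List.isChain_singleton _⟩
  rintro x hx
  simp only [List.mem_singleton] at hx
  subst hx
  simp only [Vl, ne_eq]
  intro h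
  exact hj (congrArg toAdd h)

lemma uu_ne_one : uu m ≠ 1 := by
  rw [uu_lprod]
  exact lprod_ne_one (red_Ul m) (by simp)

lemma one_ne_zero_zmod (hm : 3 ≤ m) : (1 : ZMod m) ≠ 0 := by
  haveI : Fact (1 < m) := ⟨by omega⟩
  exact one_ne_zero

lemma vv_ne_one (hm : 3 ≤ m) : vv m ≠ 1 := by
  have h1 := one_ne_zero_zmod m hm
  rw [vv, vpow_lprod m 1]
  exact lprod_ne_one (red_Vl m 1 h1) (by simp)

lemma uu_sq : uu m ^ 2 = 1 := by
  have h : (ofAdd (1 : ZMod 2)) ^ 2 = 1 := by decide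
  rw [uu, ← map_pow]
  exact (congrArg (⇑(CoprodI.of (M := Mfam m) (i := 0))) h).trans (map_one _)

lemma vv_pow_m : vv m ^ m = 1 := by
  have h : (ofAdd (1 : ZMod m)) ^ m = 1 := by
    rw [← ofAdd_nsmul, show (m • (1 : ZMod m)) = 0 by simp [nsmul_eq_mul]]
    rfl
  rw [vv, ← map_pow]
  exact (congrArg (⇑(CoprodI.of (M := Mfam m) (i := 1))) h).trans (map_one _)

/-- generator powers -/
lemma gen_pow {k : ℕ} [NeZero k] (μ : Multiplicative (ZMod k)) :
    μ = (ofAdd (1 : ZMod k)) ^ (toAdd μ).val := by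
  rw [← ofAdd_nsmul]
  rw [show ((toAdd μ).val • (1 : ZMod k)) = (((toAdd μ).val : ℕ) : ZMod k) by simp [nsmul_eq_mul]]
  rw [ZMod.natCast_val, ZMod.cast_id]
  rfl

lemma of_eq_uu_pow (μ : Mfam m 0) : CoprodI.of μ = uu m ^ (toAdd μ).val := by
  rw [uu, ← map_pow]
  exact congrArg _ (gen_pow μ)

lemma of_eq_vv_pow [NeZero m] (μ : Mfam m 1) : CoprodI.of μ = vv m ^ (toAdd μ).val := by
  rw [vv, ← map_pow]
  exact congrArg _ (gen_pow μ)

lemma gen_top [NeZero m] : Subgroup.closure {uu m, vv m} = ⊤ := by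
  rw [eq_top_iff]
  intro x hx
  clear hx
  induction x using CoprodI.induction_on with
  | one => exact one_mem _
  | of i μ =>
    match i with
    | 0 => exact (of_eq_uu_pow m μ) ▸ pow_mem (Subgroup.subset_closure (by simp)) _
    | 1 => exact (of_eq_vv_pow m μ) ▸ pow_mem (Subgroup.subset_closure (by simp)) _
  | mul x y hx hy => exact mul_mem hx hy

end C2Cm

lemma closure_pair_conj {H : Type*} [Group H] (u x : H) :
    Subgroup.closure {u, u * x * u⁻¹} = Subgroup.closure {u, x} := by
  have hu1 : u ∈ Subgroup.closure {u, x} := Subgroup.subset_closure (by simp)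
  have hx1 : x ∈ Subgroup.closure {u, x} := Subgroup.subset_closure (by simp)
  have hu2 : u ∈ Subgroup.closure {u, u * x * u⁻¹} := Subgroup.subset_closure (by simp)
  have hx2 : u * x * u⁻¹ ∈ Subgroup.closure {u, u * x * u⁻¹} := Subgroup.subset_closure (by simp)
  apply le_antisymm <;> rw [Subgroup.closure_le]
  · rintro y (rfl | rfl)
    · exact hu1
    · exact mul_mem (mul_mem hu1 hx1) (inv_mem hu1)
  · rintro y (rfl | rfl)
    · exact hu2
    · have h2 := mul_mem (mul_mem (inv_mem hu2) hx2) hu2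
      have he : u⁻¹ * (u * y * u⁻¹) * u = y := by group
      nth_rw 2 [← he]
      exact h2

namespace C2Cm

section Crux

variable {m : ℕ} (cL : List (Σ i, Mfam m i))

/-- conjugated `v`-powers -/
def wel (j : ZMod m) : G m :=
  lprod cL * CoprodI.of (M := Mfam m) (i := 1) (ofAdd j) * (lprod cL)⁻¹

lemma wel_mul (j j' : ZMod m) : wel cL j * wel cL j' = wel cL (j + j') := by
  unfold wel
  have : CoprodI.of (M := Mfam m) (i := 1) (ofAdd j) *
      CoprodI.of (M := Mfam m) (i := 1) (ofAdd j') =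
      CoprodI.of (M := Mfam m) (i := 1) (ofAdd (j + j')) := by
    rw [← map_mul]; rfl
  rw [← this]
  group

lemma wel_zero : wel cL 0 = 1 := by
  unfold wel
  simp
  exact map_one _

lemma wel_inv (j : ZMod m) : (wel cL j)⁻¹ = wel cL (-j) := by
  rw [eq_comm, eq_inv_iff_mul_eq_one, wel_mul]
  simp [wel_zero]

/-- abstract letters for the subgroup generated by `u` and the `wel`s -/
abbrev Letter (m : ℕ) := Option {j : ZMod m // j ≠ 0}

def lett : Letter m → G m := fun A => A.elim (uu m) (fun j => wel cL j.1)

def eval (al : List (Letter m)) : G m := (al.map (lett cL)).prod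

@[simp] lemma eval_nil : eval cL [] = 1 := rfl

@[simp] lemma eval_cons (A : Letter m) (al : List (Letter m)) :
    eval cL (A :: al) = lett cL A * eval cL al := by simp [eval]

@[simp] lemma eval_append (l₁ l₂ : List (Letter m)) :
    eval cL (l₁ ++ l₂) = eval cL l₁ * eval cL l₂ := by simp [eval]

@[simp] lemma eval_singleton (A : Letter m) : eval cL [A] = lett cL A := by simp [eval]

def Alt (al : List (Letter m)) : Prop := al.Chain' fun A B => A.isNone ≠ B.isNone

/-- the candidate subgroup carrier -/
def SS : Set (G m) := {x | ∃ al, Alt al ∧ eval cL al = x}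

lemma uu_mul_mem (x : G m) (hx : x ∈ SS cL) : uu m * x ∈ SS cL := by
  obtain ⟨al, halt, rfl⟩ := hx
  rcases al with _ | ⟨A, t⟩
  · exact ⟨[none], List.isChain_singleton _, by simp [lett]⟩
  rcases A with _ | j
  · refine ⟨t, halt.tail, ?_⟩
    rw [eval_cons, ← mul_assoc]
    have : uu m * lett cL none = 1 := by
      show uu m * uu m = 1
      have := uu_sq m
      rwa [pow_two] at this
    rw [this, one_mul]
  · refine ⟨none :: some j :: t, ?_, by simp [lett]⟩
    rw [Alt]; change List.IsChain _ _; rw [List.isChain_cons_cons]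
    exact ⟨by simp, halt⟩

lemma wel_mul_mem (j : ZMod m) (hj : j ≠ 0) (x : G m) (hx : x ∈ SS cL) :
    wel cL j * x ∈ SS cL := by
  obtain ⟨al, halt, rfl⟩ := hx
  rcases al with _ | ⟨A, t⟩
  · exact ⟨[some ⟨j, hj⟩], List.isChain_singleton _, by simp [lett]⟩
  rcases A with _ | j'
  · refine ⟨some ⟨j, hj⟩ :: none :: t, ?_, by simp [lett]⟩
    rw [Alt]; change List.IsChain _ _; rw [List.isChain_cons_cons]
    exact ⟨by simp, halt⟩
  · rw [eval_cons, ← mul_assoc]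
    have hjj : lett cL (some j') = wel cL j'.1 := rfl
    rw [hjj, wel_mul]
    by_cases h0 : j + j'.1 = 0
    · rw [h0, wel_zero, one_mul]
      exact ⟨t, halt.tail, rfl⟩
    · refine ⟨some ⟨j + j'.1, h0⟩ :: t, ?_, by simp [lett]⟩
      rw [Alt]; change List.IsChain _ _; rw [List.isChain_cons]
      refine ⟨?_, halt.tail⟩
      intro B hB
      have := (List.isChain_cons.mp halt).1 B hB
      simpa using this

lemma lett_mul_mem (A : Letter m) (x : G m) (hx : x ∈ SS cL) : lett cL A * x ∈ SS cL := by
  rcases A with _ | j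
  · exact uu_mul_mem cL x hx
  · exact wel_mul_mem cL j.1 j.2 x hx

lemma eval_mul_mem (al : List (Letter m)) (x : G m) (hx : x ∈ SS cL) :
    eval cL al * x ∈ SS cL := by
  induction al with
  | nil => simpa using hx
  | cons A t ih =>
    rw [eval_cons, mul_assoc]
    exact lett_mul_mem cL A _ (ih)

def invL : Letter m → Letter m := Option.map (fun j => ⟨-j.1, neg_ne_zero.mpr j.2⟩)

lemma lett_invL (A : Letter m) : lett cL (invL A) = (lett cL A)⁻¹ := by
  rcases A with _ | j
  · show uu m = (uu m)⁻¹
    rw [eq_inv_iff_mul_eq_one, ← pow_two]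
    exact uu_sq m
  · show wel cL (-j.1) = (wel cL j.1)⁻¹
    rw [wel_inv]

lemma inv_mem_SS (x : G m) (hx : x ∈ SS cL) : x⁻¹ ∈ SS cL := by
  obtain ⟨al, halt, rfl⟩ := hx
  refine ⟨(al.map invL).reverse, ?_, ?_⟩
  · rw [Alt]; change List.IsChain _ _; rw [List.isChain_reverse, List.isChain_map]
    refine halt.imp ?_
    intro A B h
    rcases A with _ | a <;> rcases B with _ | b <;> simp_all [invL]
  · clear halt
    induction al with
    | nil => simp [eval]
    | cons A t ih =>
      rw [List.map_cons, List.reverse_cons, eval_append, ih, eval_singleton, lett_invL,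
        eval_cons, mul_inv_rev]

lemma closure_subset_SS (s : ZMod m) (x : G m)
    (hx : x ∈ Subgroup.closure {uu m, wel cL s}) : x ∈ SS cL := by
  induction hx using Subgroup.closure_induction with
  | mem y hy =>
    rcases hy with rfl | rfl
    · have := uu_mul_mem cL 1 ⟨[], List.isChain_nil, rfl⟩
      simpa using this
    · by_cases hs : s = 0
      · rw [hs, wel_zero]
        exact ⟨[], List.isChain_nil, rfl⟩
      · have := wel_mul_mem cL s hs 1 ⟨[], List.isChain_nil, rfl⟩
        simpa using this
  | one => exact ⟨[], List.isChain_nil, rfl⟩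
  | mul a b _ _ ha hb =>
    obtain ⟨al, halt, rfl⟩ := ha
    exact eval_mul_mem cL al b hb
  | inv a _ ha => exact inv_mem_SS cL a ha

section Words

lemma head?_linv {ι : Type*} {M : ι → Type*} [∀ i, Group (M i)]
    (l : List (Σ i, M i)) :
    (WordInfra.linv l).head? = l.getLast?.map (fun p => ⟨p.1, p.2⁻¹⟩) := by
  rw [WordInfra.linv, List.head?_reverse, List.getLast?_map]

lemma getLast?_linv {ι : Type*} {M : ι → Type*} [∀ i, Group (M i)]
    (l : List (Σ i, M i)) :
    (WordInfra.linv l).getLast? = l.head?.map (fun p => ⟨p.1, p.2⁻¹⟩) := by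
  rw [WordInfra.linv, List.getLast?_reverse, List.head?_map]

variable (hcred : Red cL) (hchead : ∀ p ∈ cL.head?, p.1 = 1)
  (hclast : ∀ p ∈ cL.getLast?, p.1 = 0) (hcne : cL ≠ [])

/-- the index of the first (resp. last) letter of the normal form of `lett A` -/
def lidx : Letter m → Fin 2 := fun A => A.elim 0 (fun _ => 1)

/-- the normal form of `lett A` -/
def lw : Letter m → List (Σ i, Mfam m i) := fun A =>
  A.elim [Ul m] (fun j => cL ++ Vl m j.1 :: WordInfra.linv cL)

lemma lw_ne_nil (A : Letter m) : lw cL A ≠ [] := by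
  rcases A with _ | j <;> simp [lw]

include hcred hchead hclast hcne

lemma lw_red (A : Letter m) : Red (lw cL A) := by
  rcases A with _ | j
  · exact red_Ul m
  · show Red (cL ++ Vl m j.1 :: WordInfra.linv cL)
    refine Red.append hcred ?_ ?_
    · refine ⟨?_, ?_⟩
      · rintro x hx
        rcases List.mem_cons.mp hx with rfl | hx
        · exact (red_Vl m j.1 j.2).1 _ (by simp)
        · exact hcred.linv.1 x hx
      · change List.IsChain _ _; rw [List.isChain_cons]
        refine ⟨?_, hcred.linv.2⟩
        intro q hq
        rw [head?_linv] at hq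
        simp only [Option.mem_map] at hq
        obtain ⟨p, hp, rfl⟩ := hq
        have := hclast p hp
        show (Vl m j.1).1 ≠ _
        simp [Vl, this]
    · intro p hp q hq
      simp only [List.head?_cons, Option.mem_some_iff] at hq
      subst hq
      rw [hclast p hp]
      simp [Vl]

lemma lw_lprod (A : Letter m) : lprod (lw cL A) = lett cL A := by
  rcases A with _ | j
  · show lprod [Ul m] = uu m
    rw [← uu_lprod]
  · show lprod (cL ++ Vl m j.1 :: WordInfra.linv cL) = wel cL j.1
    rw [show (Vl m j.1 :: WordInfra.linv cL) = [Vl m j.1] ++ WordInfra.linv cL from rfl]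
    rw [lprod_append, lprod_append, lprod_linv, lprod_singleton, wel, mul_assoc]
    rfl

lemma lw_head (A : Letter m) : ∀ p ∈ (lw cL A).head?, p.1 = lidx A := by
  rcases A with _ | j
  · intro p hp
    simp only [lw, Option.elim, List.head?_cons, Option.mem_some_iff] at hp
    subst hp
    rfl
  · intro p hp
    show p.1 = 1
    rw [show lw cL (some j) = cL ++ Vl m j.1 :: WordInfra.linv cL from rfl] at hp
    rw [List.head?_append_of_ne_nil _ hcne] at hp
    exact hchead p hp

lemma lw_last (A : Letter m) : ∀ p ∈ (lw cL A).getLast?, p.1 = lidx A := by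
  rcases A with _ | j
  · intro p hp
    simp only [lw, Option.elim] at hp
    simp only [List.getLast?_singleton, Option.mem_some_iff] at hp
    subst hp
    rfl
  · intro p hp
    show p.1 = 1
    rw [show lw cL (some j) = cL ++ Vl m j.1 :: WordInfra.linv cL from rfl] at hp
    have hlinvne : WordInfra.linv cL ≠ [] := by
      simp [WordInfra.linv, hcne]
    rw [List.getLast?_append_of_ne_nil _ (by simp [hlinvne])] at hp
    rw [show (Vl m j.1 :: WordInfra.linv cL) = [Vl m j.1] ++ WordInfra.linv cL from rfl,
      List.getLast?_append_of_ne_nil _ hlinvne, getLast?_linv] at hp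
    simp only [Option.mem_map] at hp
    obtain ⟨q, hq, rfl⟩ := hp
    exact hchead q hq

lemma lw_mem0 (A : Letter m) : ∃ p ∈ lw cL A, p.1 = 0 := by
  rcases A with _ | j
  · exact ⟨Ul m, by simp [lw], rfl⟩
  · refine ⟨cL.getLast hcne, ?_, ?_⟩
    · show _ ∈ lw cL (some j)
      rw [show lw cL (some j) = cL ++ Vl m j.1 :: WordInfra.linv cL from rfl]
      exact List.mem_append.mpr (Or.inl (List.getLast_mem hcne))
    · exact hclast _ (by rw [List.getLast?_eq_getLast hcne]; rfl)

lemma eval_word : ∀ (al : List (Letter m)) (A : Letter m), Alt (A :: al) →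
    ∃ L, Red L ∧ lprod L = eval cL (A :: al) ∧ L ≠ [] ∧
      (∀ p ∈ L.head?, p.1 = lidx A) ∧
      (∀ p ∈ L.getLast?, p.1 = lidx ((A :: al).getLast (by simp))) ∧
      (∃ p ∈ L, p.1 = 0) := by
  intro al
  induction al with
  | nil =>
    intro A _
    refine ⟨lw cL A, lw_red cL hcred hchead hclast hcne A, ?_, lw_ne_nil cL A,
      lw_head cL hcred hchead hclast hcne A, ?_, lw_mem0 cL hcred hchead hclast hcne A⟩
    · rw [lw_lprod cL hcred hchead hclast hcne A]
      simp
    · intro p hp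
      exact lw_last cL hcred hchead hclast hcne A p hp
  | cons B t ih =>
    intro A halt
    have hab : A.isNone ≠ B.isNone := (List.isChain_cons_cons.mp halt).1
    obtain ⟨L', hred', hprod', hne', hhead', hlast', hmem'⟩ :=
      ih B (List.isChain_cons_cons.mp halt).2
    refine ⟨lw cL A ++ L', ?_, ?_, by simp [lw_ne_nil cL A], ?_, ?_, ?_⟩
    · refine Red.append (lw_red cL hcred hchead hclast hcne A) hred' ?_
      intro p hp q hq
      rw [lw_last cL hcred hchead hclast hcne A p hp, hhead' q hq]
      rcases A with _ | a <;> rcases B with _ | b <;> simp_all [lidx]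
    · rw [lprod_append, lw_lprod cL hcred hchead hclast hcne A, hprod', ← eval_cons]
    · intro p hp
      rw [List.head?_append_of_ne_nil _ (lw_ne_nil cL A)] at hp
      exact lw_head cL hcred hchead hclast hcne A p hp
    · intro p hp
      rw [List.getLast?_append_of_ne_nil _ hne'] at hp
      rw [hlast' p hp]
      have hgl : (A :: B :: t).getLast (by simp) = (B :: t).getLast (by simp) :=
        List.getLast_cons (by simp)
      rw [hgl]
    · obtain ⟨p, hp, hp0⟩ := lw_mem0 cL hcred hchead hclast hcne A
      exact ⟨p, List.mem_append.mpr (Or.inl hp), hp0⟩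

lemma notv (hm : 3 ≤ m) (s : ZMod m) :
    vv m ∉ Subgroup.closure {uu m, wel cL s} := by
  intro hv
  have hS := closure_subset_SS cL s _ hv
  obtain ⟨al, halt, heval⟩ := hS
  rcases al with _ | ⟨A, t⟩
  · exact vv_ne_one m hm (by rw [← heval]; rfl)
  obtain ⟨L, hred, hprod, hne, _, _, hmem0⟩ := eval_word cL hcred hchead hclast hcne t A halt
  have h1 := one_ne_zero_zmod m hm
  have hvred : vv m = lprod [Vl m 1] := by rw [vv, vpow_lprod]
  have : L = [Vl m 1] := red_unique hred (red_Vl m 1 h1) (by rw [hprod, heval, ← hvred])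
  obtain ⟨p, hp, hp0⟩ := hmem0
  rw [this, List.mem_singleton] at hp
  subst hp
  simp [Vl] at hp0

end Words

lemma zmod2_elim : ∀ (μ : Multiplicative (ZMod 2)), μ ≠ 1 → μ = ofAdd 1 := by decide

lemma crux_aux (hm : 3 ≤ m) (s : ZMod m) (hs : s ≠ 0) :
    ∀ (N : ℕ) (l : List (Σ i, Mfam m i)), l.length ≤ N → Red l →
    Subgroup.closure {uu m,
      lprod l * CoprodI.of (M := Mfam m) (i := 1) (ofAdd s) * (lprod l)⁻¹} = ⊤ →
    ∃ (ε : Bool) (k : ZMod m),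
      lprod l = (cond ε (uu m) 1) * CoprodI.of (M := Mfam m) (i := 1) (ofAdd k) := by
  intro N
  induction N with
  | zero =>
    intro l hlen _ _
    rw [Nat.le_zero, List.length_eq_zero_iff] at hlen
    subst hlen
    exact ⟨false, 0, by simp; exact (map_one _).symm⟩
  | succ N ih =>
    intro l hlen hred htop
    rcases hl : l with _ | ⟨⟨i, μ⟩, t⟩
    · exact ⟨false, 0, by simp; exact (map_one _).symm⟩
    subst hl
    have hμne : μ ≠ 1 := hred.1 _ List.mem_cons_self
    have hi2 : i = 0 ∨ i = 1 := by fin_cases i <;> simp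
    rcases hi2 with rfl | rfl
    · -- first letter is `u`: strip it
      have hμ : μ = ofAdd (1 : ZMod 2) := zmod2_elim μ hμne
      have hofμ : CoprodI.of (M := Mfam m) (i := 0) μ = uu m := by
        rw [uu]
        exact congrArg _ hμ
      have hc : lprod ((⟨0, μ⟩ : Σ i, Mfam m i) :: t) = uu m * lprod t := by
        rw [lprod_cons]
        exact congrArg (· * lprod t) hofμ
      have helt : lprod ((⟨0, μ⟩ : Σ i, Mfam m i) :: t) *
          CoprodI.of (M := Mfam m) (i := 1) (ofAdd s) *
          (lprod ((⟨0, μ⟩ : Σ i, Mfam m i) :: t))⁻¹ =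
          uu m * (lprod t * CoprodI.of (M := Mfam m) (i := 1) (ofAdd s) * (lprod t)⁻¹) *
            (uu m)⁻¹ := by
        rw [hc]; group
      have htop' : Subgroup.closure {uu m,
          lprod t * CoprodI.of (M := Mfam m) (i := 1) (ofAdd s) * (lprod t)⁻¹} = ⊤ := by
        rw [← closure_pair_conj (uu m)
          (lprod t * CoprodI.of (M := Mfam m) (i := 1) (ofAdd s) * (lprod t)⁻¹), ← helt]
        exact htop
      obtain ⟨ε, k, hek⟩ := ih t (by simpa using hlen) hred.tail htop'
      have huu2 : uu m * uu m = 1 := by rw [← pow_two]; exact uu_sq m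
      refine ⟨!ε, k, ?_⟩
      rw [hc, hek]
      cases ε
      · simp only [Bool.not_false, cond, one_mul]
      · simp only [Bool.not_true, cond, one_mul]
        rw [← mul_assoc, huu2, one_mul]
    · -- first letter is a `v`-power
      set l : List (Σ i, Mfam m i) := ⟨1, μ⟩ :: t with hldef
      have hlne : l ≠ [] := by simp [hldef]
      rcases hbb : l.getLast hlne with ⟨ib, b2⟩
      have hb2ne : b2 ≠ 1 := by
        have := hred.1 (l.getLast hlne) (List.getLast_mem hlne)
        rwa [hbb] at this
      have hib2 : ib = 0 ∨ ib = 1 := by fin_cases ib <;> simp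
      rcases hib2 with rfl | rfl
      · -- bad shape: head idx 1, last idx 0: contradiction via notv
        exfalso
        have hchead : ∀ p ∈ l.head?, p.1 = 1 := by
          intro p hp
          simp only [hldef, List.head?_cons, Option.mem_some_iff] at hp
          subst hp; rfl
        have hclast : ∀ p ∈ l.getLast?, p.1 = 0 := by
          intro p hp
          rw [List.getLast?_eq_getLast hlne, Option.mem_some_iff] at hp
          subst hp
          rw [hbb]
        have := notv l hred hchead hclast hlne hm s
        rw [show wel l s =
          lprod l * CoprodI.of (M := Mfam m) (i := 1) (ofAdd s) * (lprod l)⁻¹ from rfl,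
          htop] at this
        exact this (Subgroup.mem_top _)
      · -- last letter is a `v`-power: strip it from the right
        have hdec : l.dropLast ++ [(⟨1, b2⟩ : Σ i, Mfam m i)] = l := by
          rw [← hbb]; exact List.dropLast_append_getLast hlne
        set mid := l.dropLast with hmid
        have hmidred : Red mid := hred.prefix (List.dropLast_prefix l)
        have hc : lprod l = lprod mid * CoprodI.of (M := Mfam m) (i := 1) b2 := by
          conv_lhs => rw [← hdec]
          rw [lprod_append, lprod_singleton]
        have hcomm : CoprodI.of (M := Mfam m) (i := 1) b2 *
            CoprodI.of (M := Mfam m) (i := 1) (ofAdd s) *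
            (CoprodI.of (M := Mfam m) (i := 1) b2)⁻¹ =
            CoprodI.of (M := Mfam m) (i := 1) (ofAdd s) := by
          rw [← map_inv, ← map_mul, ← map_mul, mul_comm b2, mul_assoc, mul_inv_cancel, mul_one]
        have helt : lprod l * CoprodI.of (M := Mfam m) (i := 1) (ofAdd s) * (lprod l)⁻¹ =
            lprod mid * CoprodI.of (M := Mfam m) (i := 1) (ofAdd s) * (lprod mid)⁻¹ := by
          rw [hc]
          conv_rhs => rw [← hcomm]
          group
        have htop' : Subgroup.closure {uu m,
            lprod mid * CoprodI.of (M := Mfam m) (i := 1) (ofAdd s) * (lprod mid)⁻¹} = ⊤ := by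
          rw [← helt]
          exact htop
        have hlenmid : mid.length ≤ N := by
          have h1 : mid.length + 1 = l.length := by
            conv_rhs => rw [← hdec]; simp
          have h2 : l.length ≤ N + 1 := hlen
          omega
        obtain ⟨ε, k, hek⟩ := ih mid hlenmid hmidred htop'
        refine ⟨ε, k + toAdd (show Multiplicative (ZMod m) from b2), ?_⟩
        rw [hc, hek, mul_assoc, ← map_mul]
        rfl

lemma crux (hm : 3 ≤ m) (s : ZMod m) (hs : s ≠ 0) (c : G m)
    (htop : Subgroup.closure {uu m,
      c * CoprodI.of (M := Mfam m) (i := 1) (ofAdd s) * c⁻¹} = ⊤) :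
    ∃ (ε : Bool) (k : ZMod m),
      c = (cond ε (uu m) 1) * CoprodI.of (M := Mfam m) (i := 1) (ofAdd k) := by
  obtain ⟨l, hl, rfl⟩ := exists_red c
  exact crux_aux hm s hs l.length l le_rfl hl htop

end Crux

end C2Cm

namespace C2Cm

section Glue

/-- homms out of `Multiplicative (ZMod k)` from an element whose `k`-th power is `1` -/
def zmodHom {P : Type*} [Group P] (k : ℕ) [NeZero k] (x : P) (hx : x ^ k = 1) :
    Multiplicative (ZMod k) →* P where
  toFun μ := x ^ (toAdd μ).val
  map_one' := by simp
  map_mul' a b := by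
    rw [← pow_add]
    have hdvd : orderOf x ∣ k := orderOf_dvd_of_pow_eq_one hx
    rw [pow_eq_pow_iff_modEq]
    refine Nat.ModEq.of_dvd hdvd ?_
    show (toAdd (a * b)).val ≡ (toAdd a).val + (toAdd b).val [MOD k]
    have : toAdd (a * b) = toAdd a + toAdd b := rfl
    rw [this, ZMod.val_add]
    exact (Nat.mod_modEq _ _)

lemma zmodHom_gen {P : Type*} [Group P] (k : ℕ) [NeZero k] (hk : 1 < k) (x : P)
    (hx : x ^ k = 1) : zmodHom k x hx (ofAdd 1) = x := by
  show x ^ (toAdd (ofAdd (1 : ZMod k))).val = x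
  rw [toAdd_ofAdd, ZMod.val_one_eq_one_mod, Nat.mod_eq_of_lt hk, pow_one]

lemma hom_ext_zmod {k : ℕ} [NeZero k] {P : Type*} [Monoid P]
    {g₁ g₂ : Multiplicative (ZMod k) →* P} (h : g₁ (ofAdd 1) = g₂ (ofAdd 1)) : g₁ = g₂ := by
  apply MonoidHom.ext; intro μ
  rw [gen_pow μ, map_pow, map_pow, h]

end Glue

end C2Cm

namespace C2Cm

section Glue2

variable (m : ℕ)

abbrev P (m : ℕ) := PresentedGroup (relC2Cm m)

lemma p0_sq : (PresentedGroup.of (rels := relC2Cm m) 0) ^ 2 = 1 := by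
  have : ((PresentedGroup.mk (relC2Cm m)) (FreeGroup.of 0 ^ 2)) = 1 := by
    apply (QuotientGroup.eq_one_iff _).mpr
    exact Subgroup.subset_normalClosure (by simp [relC2Cm])
  rwa [map_pow] at this

lemma p1_pow_m : (PresentedGroup.of (rels := relC2Cm m) 1) ^ m = 1 := by
  have : ((PresentedGroup.mk (relC2Cm m)) (FreeGroup.of 1 ^ m)) = 1 := by
    apply (QuotientGroup.eq_one_iff _).mpr
    exact Subgroup.subset_normalClosure (by simp [relC2Cm])
  rwa [map_pow] at this

/-- the map from the presented group to the free product -/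
def fα : P m →* G m :=
  PresentedGroup.toGroup (f := ![uu m, vv m]) (by
    rintro r (rfl | rfl)
    · rw [map_pow]
      simp only [FreeGroup.lift_apply_of, Matrix.cons_val_zero]
      exact uu_sq m
    · rw [map_pow]
      simp only [FreeGroup.lift_apply_of, Matrix.cons_val_one, Matrix.head_cons]
      exact vv_pow_m m)

@[simp] lemma fα_of0 : fα m (PresentedGroup.of 0) = uu m := by
  rw [fα, PresentedGroup.toGroup.of]
  simp

@[simp] lemma fα_of1 : fα m (PresentedGroup.of 1) = vv m := by
  rw [fα, PresentedGroup.toGroup.of]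
  simp

variable [NeZero m] (hm : 3 ≤ m)

lemma fin2_cases (i : Fin 2) : i = 0 ∨ i = 1 := by omega

/-- the component maps of `fβ` -/
def fβfam [NeZero m] : ∀ i : Fin 2, Mfam m i →* P m
  | ⟨0, _⟩ => zmodHom 2 (PresentedGroup.of 0) (p0_sq m)
  | ⟨1, _⟩ => zmodHom m (PresentedGroup.of 1) (p1_pow_m m)

/-- the map from the free product to the presented group -/
def fβ : G m →* P m := CoprodI.lift (fβfam m)

lemma fβfam_zero : fβfam m 0 = zmodHom 2 (PresentedGroup.of 0) (p0_sq m) := rfl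

lemma fβfam_one : fβfam m 1 = zmodHom m (PresentedGroup.of 1) (p1_pow_m m) := rfl

@[simp] lemma fβ_uu : fβ m (uu m) = PresentedGroup.of 0 := by
  rw [fβ, uu, CoprodI.lift_of, fβfam_zero]
  exact zmodHom_gen 2 (by norm_num) (PresentedGroup.of 0) (p0_sq m)

@[simp] lemma fβ_vv (hm : 3 ≤ m) : fβ m (vv m) = PresentedGroup.of 1 := by
  rw [fβ, vv, CoprodI.lift_of, fβfam_one]
  exact zmodHom_gen m (by omega) (PresentedGroup.of 1) (p1_pow_m m)

lemma fβ_fα (hm : 3 ≤ m) : ∀ x : P m, fβ m (fα m x) = x := by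
  have : (fβ m).comp (fα m) = MonoidHom.id (P m) := by
    apply PresentedGroup.ext
    intro x
    rcases fin2_cases x with rfl | rfl
    · simp [MonoidHom.comp_apply]
    · simp [MonoidHom.comp_apply, fβ_vv m hm]
  intro x
  exact DFunLike.congr_fun this x

lemma fα_fβ (hm : 3 ≤ m) : ∀ x : G m, fα m (fβ m x) = x := by
  have : (fα m).comp (fβ m) = MonoidHom.id (G m) := by
    apply CoprodI.ext_hom
    intro i
    rcases fin2_cases i with rfl | rfl
    · apply hom_ext_zmod
      show fα m (fβ m (uu m)) = CoprodI.of (M := Mfam m) (i := 0) (ofAdd 1)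
      rw [fβ_uu, fα_of0]
      rfl
    · apply hom_ext_zmod
      show fα m (fβ m (vv m)) = CoprodI.of (M := Mfam m) (i := 1) (ofAdd 1)
      rw [fβ_vv m hm, fα_of1]
      rfl
  intro x
  exact DFunLike.congr_fun this x

end Glue2

end C2Cm

namespace C2Cm

section Orders

variable (m : ℕ)

lemma orderOf_conj {H : Type*} [Group H] (g x : H) : orderOf (g * x * g⁻¹) = orderOf x := by
  have : g * x * g⁻¹ = (MulAut.conj g) x := rfl
  rw [this]
  exact orderOf_injective (MulAut.conj g).toMonoidHom (MulAut.conj g).injective x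

lemma orderOf_vv [NeZero m] : orderOf (vv m) = m := by
  rw [vv, orderOf_injective (CoprodI.of (M := Mfam m) (i := 1)) (CoprodI.of_injective 1)]
  show orderOf (ofAdd (1 : ZMod m)) = m
  rw [orderOf_ofAdd_eq_addOrderOf]
  exact ZMod.addOrderOf_one m

lemma zmod2_sq : ∀ z : Multiplicative (ZMod 2), z ^ 2 = 1 := by decide

/-- quotient onto `C₂` killing `v` -/
def qfam [NeZero m] : ∀ i : Fin 2, Mfam m i →* Multiplicative (ZMod 2)
  | ⟨0, _⟩ => zmodHom 2 (ofAdd (1 : ZMod 2)) (zmod2_sq _)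
  | ⟨1, _⟩ => zmodHom m (1 : Multiplicative (ZMod 2)) (one_pow m)

def qq [NeZero m] : G m →* Multiplicative (ZMod 2) := CoprodI.lift (qfam m)

lemma qq_uu [NeZero m] : qq m (uu m) = ofAdd 1 := by
  rw [qq, uu, CoprodI.lift_of, show qfam m 0 = zmodHom 2 (ofAdd (1 : ZMod 2)) (zmod2_sq _) from rfl]
  exact zmodHom_gen 2 (by norm_num) _ _

lemma qq_of1 [NeZero m] (μ : Mfam m 1) : qq m (CoprodI.of μ) = 1 := by
  rw [qq, CoprodI.lift_of, show qfam m 1 = zmodHom m 1 (one_pow m) from rfl]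
  show (1 : Multiplicative (ZMod 2)) ^ _ = 1
  exact one_pow _

end Orders

end C2Cm


/-- every automorphism `φ` of `C₂ ⋆ C_m` (`m ≥ 3`) equals `ν_r ∘ ι_g`
for some `g` and some `1 ≤ r ≤ m-1` coprime to `m`; equivalently, on the generators,
`φ u = g u g⁻¹` and `φ v = g vʳ g⁻¹`. -/
theorem stmt2 (m : ℕ) (hm : 3 ≤ m)
    (φ : PresentedGroup (relC2Cm m) ≃* PresentedGroup (relC2Cm m)) :
    ∃ (r : ℕ) (g : PresentedGroup (relC2Cm m)),
      1 ≤ r ∧ r ≤ m - 1 ∧ Nat.Coprime r m ∧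
      φ (PresentedGroup.of 0) = g * PresentedGroup.of 0 * g⁻¹ ∧
      φ (PresentedGroup.of 1) = g * (PresentedGroup.of 1) ^ r * g⁻¹ := by
  haveI : NeZero m := ⟨by omega⟩
  classical
  set α := C2Cm.fα m with hα
  set β := C2Cm.fβ m with hβ
  set φ' : C2Cm.G m →* C2Cm.G m := α.comp ((φ.toMonoidHom).comp β) with hφ'
  have hβα := C2Cm.fβ_fα m hm
  have hαβ := C2Cm.fα_fβ m hm
  have hφ'app : ∀ x, φ' x = α (φ (β x)) := fun x => rfl
  have hφ'surj : Function.Surjective φ' := by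
    intro z
    refine ⟨α (φ.symm (β z)), ?_⟩
    rw [hφ'app, hβα, MulEquiv.apply_symm_apply, hαβ]
  have hφ'inj : Function.Injective φ' := by
    intro x y hxy
    rw [hφ'app, hφ'app] at hxy
    have h1 := congrArg β hxy
    rw [hβα, hβα] at h1
    have h2 := φ.injective h1
    have h3 := congrArg α h2
    rwa [hαβ, hαβ] at h3
  set X := φ' (C2Cm.uu m) with hX
  set Y := φ' (C2Cm.vv m) with hY
  have hX2 : X ^ 2 = 1 := by rw [hX, ← map_pow, C2Cm.uu_sq, map_one]
  have hX1 : X ≠ 1 := by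
    intro h
    have : φ' (C2Cm.uu m) = φ' 1 := by rw [map_one, ← hX, h]
    exact C2Cm.uu_ne_one m (hφ'inj this)
  have hYord : orderOf Y = m := by
    rw [hY, orderOf_injective φ' hφ'inj, C2Cm.orderOf_vv]
  have hYm : Y ^ m = 1 := by
    have := pow_orderOf_eq_one Y
    rwa [hYord] at this
  have hY1 : Y ≠ 1 := by
    intro h
    rw [h, orderOf_one] at hYord
    omega
  obtain ⟨a, i, μ, hμ1, hXeq⟩ := WordInfra.torsion_conj (n := 2) (by norm_num) hX2 hX1
  obtain ⟨b, i', ν, hν1, hYeq⟩ := WordInfra.torsion_conj (n := m) (by omega) hYm hY1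
  have hνord : orderOf ν = m := by
    have h1 : orderOf Y = orderOf (CoprodI.of ν) := by rw [hYeq, C2Cm.orderOf_conj]
    rw [h1, orderOf_injective _ (Monoid.CoprodI.of_injective i') ν] at hYord
    exact hYord
  -- `ν` lies in the second factor
  rcases C2Cm.fin2_cases i' with rfl | rfl
  · exfalso
    have h2 : ν ^ 2 = 1 := C2Cm.zmod2_sq ν
    have hdvd := orderOf_dvd_of_pow_eq_one h2
    rw [hνord] at hdvd
    have := Nat.le_of_dvd (by norm_num) hdvd
    omega
  -- `μ` lies in the first factor
  rcases C2Cm.fin2_cases i with rfl | rfl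
  · -- main case
    have hofμ : (CoprodI.of μ : C2Cm.G m) = C2Cm.uu m := by
      rw [C2Cm.zmod2_elim μ hμ1]
      rfl
    rw [hofμ] at hXeq
    set ν' : Multiplicative (ZMod m) := ν with hν'
    set s : ZMod m := toAdd ν' with hsdef
    have hofs : CoprodI.of (M := C2Cm.Mfam m) (i := 1) (ofAdd s) = CoprodI.of ν := rfl
    have haddord : addOrderOf s = m := by
      have h1 := orderOf_ofAdd_eq_addOrderOf s
      rw [show ofAdd s = ν' from rfl] at h1
      rw [← h1]
      exact hνord
    have hs0 : s ≠ 0 := by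
      intro h
      rw [h, addOrderOf_zero] at haddord
      omega
    -- surjectivity: the images generate
    have htop1 : Subgroup.closure {X, Y} = ⊤ := by
      have h1 : Subgroup.map φ' (Subgroup.closure {C2Cm.uu m, C2Cm.vv m}) = ⊤ := by
        rw [C2Cm.gen_top]
        exact Subgroup.map_top_of_surjective φ' hφ'surj
      rw [MonoidHom.map_closure, Set.image_pair] at h1
      exact h1
    set c : C2Cm.G m := a⁻¹ * b with hc
    have hb : b = a * c := by rw [hc]; group
    have htop2 : Subgroup.closure {C2Cm.uu m,
        c * CoprodI.of (M := C2Cm.Mfam m) (i := 1) (ofAdd s) * c⁻¹} = ⊤ := by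
      have hmap := MonoidHom.map_closure (MulAut.conj a⁻¹).toMonoidHom {X, Y}
      rw [htop1, Subgroup.map_top_of_surjective _ (MulAut.conj a⁻¹).surjective] at hmap
      rw [← hmap.symm]
      congr 1
      rw [Set.image_pair]
      have h1 : (MulAut.conj a⁻¹).toMonoidHom X = C2Cm.uu m := by
        rw [hXeq]
        show a⁻¹ * (a * C2Cm.uu m * a⁻¹) * a⁻¹⁻¹ = C2Cm.uu m
        group
      have h2 : (MulAut.conj a⁻¹).toMonoidHom Y =
          c * CoprodI.of (M := C2Cm.Mfam m) (i := 1) (ofAdd s) * c⁻¹ := by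
        rw [hYeq, hb, hofs]
        show a⁻¹ * (a * c * CoprodI.of ν * (a * c)⁻¹) * a⁻¹⁻¹ = c * CoprodI.of ν * c⁻¹
        group
      rw [h1, h2]
    obtain ⟨ε, k, hck⟩ := C2Cm.crux hm s hs0 c htop2
    set e : C2Cm.G m := cond ε (C2Cm.uu m) 1 with he
    set g' : C2Cm.G m := a * e with hg'
    have hXg : X = g' * C2Cm.uu m * g'⁻¹ := by
      rw [hXeq, hg', he]
      rcases ε with _ | _
      · simp only [cond]
        group
      · simp only [cond]
        group
    have hYg : Y = g' * CoprodI.of (M := C2Cm.Mfam m) (i := 1) (ofAdd s) * g'⁻¹ := by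
      rw [hYeq, hb, hck, hg', hofs]
      have hcomm : CoprodI.of (M := C2Cm.Mfam m) (i := 1) (ofAdd k) * CoprodI.of ν *
          (CoprodI.of (M := C2Cm.Mfam m) (i := 1) (ofAdd k))⁻¹ = CoprodI.of ν := by
        rw [← map_inv, ← map_mul, ← map_mul]
        exact congrArg _ (mul_inv_cancel_comm _ _)
      rw [show a * (e * CoprodI.of (M := C2Cm.Mfam m) (i := 1) (ofAdd k)) * CoprodI.of ν *
          (a * (e * CoprodI.of (M := C2Cm.Mfam m) (i := 1) (ofAdd k)))⁻¹ =
          (a * e) * (CoprodI.of (M := C2Cm.Mfam m) (i := 1) (ofAdd k) * CoprodI.of ν *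
            (CoprodI.of (M := C2Cm.Mfam m) (i := 1) (ofAdd k))⁻¹) * (a * e)⁻¹ from by group]
      rw [hcomm]
    -- the exponent
    set r : ℕ := ZMod.val s with hr
    have hr1 : 1 ≤ r := by
      rcases Nat.eq_zero_or_pos r with h | h
      · exfalso
        exact hs0 ((ZMod.val_eq_zero s).mp h)
      · exact h
    have hrm : r ≤ m - 1 := by
      have := ZMod.val_lt s
      omega
    have hcop : Nat.Coprime r m := by
      have hcast : ((r : ℕ) : ZMod m) = s := ZMod.natCast_rightInverse s
      have h1 : addOrderOf ((r : ℕ) : ZMod m) = m / Nat.gcd m r :=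
        ZMod.addOrderOf_coe r (NeZero.ne m)
      rw [hcast, haddord] at h1
      have hgcd : Nat.gcd m r = 1 := by
        rcases (Nat.div_eq_self.mp h1.symm) with h | h
        · exact absurd h (NeZero.ne m)
        · exact h
      rw [Nat.Coprime, Nat.gcd_comm]
      exact hgcd
    have hvr : (C2Cm.vv m) ^ r = CoprodI.of (M := C2Cm.Mfam m) (i := 1) (ofAdd s) := by
      rw [C2Cm.vv, ← map_pow]
      congr 1
      show (ofAdd (1 : ZMod m)) ^ r = ofAdd s
      rw [← ofAdd_nsmul]
      congr 1
      rw [show r • (1 : ZMod m) = ((r : ℕ) : ZMod m) by simp [nsmul_eq_mul]]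
      exact ZMod.natCast_rightInverse s
    -- transport back
    refine ⟨r, β g', hr1, hrm, hcop, ?_, ?_⟩
    · have e1 : β X = φ (PresentedGroup.of 0) := by
        rw [hX, hφ'app, hβα, hβ, C2Cm.fβ_uu]
      have e2 : β X = β g' * PresentedGroup.of 0 * (β g')⁻¹ := by
        rw [hXg, map_mul, map_mul, map_inv, hβ, C2Cm.fβ_uu]
      rw [← e1, e2]
    · have e1 : β Y = φ (PresentedGroup.of 1) := by
        rw [hY, hφ'app, hβα, hβ, C2Cm.fβ_vv m hm]
      have e2 : β Y = β g' * (PresentedGroup.of 1) ^ r * (β g')⁻¹ := by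
        rw [hYg, ← hvr, map_mul, map_mul, map_inv, map_pow, hβ, C2Cm.fβ_vv m hm]
      rw [← e1, e2]
  · -- `μ` in the second factor: contradiction via the quotient to `C₂`
    exfalso
    have hqX : C2Cm.qq m X = 1 := by
      rw [hXeq, map_mul, map_mul, map_inv, C2Cm.qq_of1, mul_one, mul_inv_cancel]
    have hqY : C2Cm.qq m Y = 1 := by
      rw [hYeq, map_mul, map_mul, map_inv, C2Cm.qq_of1, mul_one, mul_inv_cancel]
    have hall : ∀ z : C2Cm.G m, C2Cm.qq m (φ' z) = 1 := by
      intro z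
      have hz : z ∈ Subgroup.closure {C2Cm.uu m, C2Cm.vv m} := by
        rw [C2Cm.gen_top]
        trivial
      induction hz using Subgroup.closure_induction with
      | mem y hy =>
        rcases hy with rfl | rfl
        · exact hqX
        · exact hqY
      | one => rw [map_one, map_one]
      | mul p q _ _ ihp ihq => rw [map_mul, map_mul, ihp, ihq, mul_one]
      | inv p _ ihp => rw [map_inv, map_inv, ihp, inv_one]
    obtain ⟨w, hw⟩ := hφ'surj (C2Cm.uu m)
    have hcontr := hall w
    rw [hw, C2Cm.qq_uu] at hcontr
    exact (by decide : (ofAdd (1 : ZMod 2)) ≠ (1 : Multiplicative (ZMod 2))) hcontr
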